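/- Let P := (1/2)·J_𝓗(I + R_G)J_𝓗 as above and M_G := (I + A_G D_G^{-1})/2. If x is an eigenvector of P with nonzero eigenvalue η, then x is constant on each block {(v,j) : 1 ≤ j ≤ deg_G(v)}, and the vector y defined by y_v = x_{(v,j)} is an eigenvector of M_G with eigenvalue η. Conversely, every eigenvector of M_G with eigenvalue η lifts (by constant extension on blocks) to an eigenvector of P with eigenvalue η. Hence the nonzero eigenvalues of P coincide with the nonzero eigenvalues of M_G (with correspondence). -/

import Mathlib

open Finset

/-- Vertices of the non-uniform replacement product: a cloud `Fin (deg u)` per vertex `u`. -/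
abbrev RPVert {V : Type*} [Fintype V] (G : SimpleGraph V) [DecidableRel G.Adj] :=
  Σ u : V, Fin (G.degree u)

/-- Let `P` be the matrix on the rotation-map vertices with
`P_{(u,i),(v,j)} = W_G(u,v)/deg_G(v)` and `M_G := (I + A_G D_G⁻¹)/2`.  If `x` is a
(row) eigenvector of `P` with nonzero eigenvalue `η`, then `x` is constant on each
block `{(v,j) : j < deg v}`, and the induced vector `y` (with `y_v = x_{(v,j)}`) is
an eigenvector of `M_G` with eigenvalue `η`.  Conversely, every eigenvector of `M_G`
with eigenvalue `η` lifts, by constant extension on blocks, to an eigenvector of `P`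
with eigenvalue `η` (nonzero if `y` is nonzero).  Hence the nonzero eigenvalues of
`P` and of `M_G` coincide. -/
theorem P_M_eigenvector_correspondence
    {V : Type*} [Fintype V] [DecidableEq V]
    (G : SimpleGraph V) [DecidableRel G.Adj]
    (hdeg : ∀ v : V, 0 < G.degree v)
    (WG M : Matrix V V ℝ)
    (hWG : WG = Matrix.of fun u v =>
      (2 : ℝ)⁻¹ * ((if u = v then (1 : ℝ) else 0)
        + (if G.Adj u v then (1 : ℝ) else 0) / (G.degree u : ℝ)))
    (hM : M = (2 : ℝ)⁻¹ •
      ((1 : Matrix V V ℝ) +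
        G.adjMatrix ℝ * Matrix.diagonal fun v => ((G.degree v : ℝ))⁻¹))
    (P : Matrix (RPVert G) (RPVert G) ℝ)
    (hP : P = Matrix.of fun x y => WG x.1 y.1 / (G.degree y.1 : ℝ)) :
    (∀ (x : RPVert G → ℝ) (η : ℝ), η ≠ 0 → Matrix.vecMul x P = η • x →
      (∀ (v : V) (j j' : Fin (G.degree v)), x ⟨v, j⟩ = x ⟨v, j'⟩) ∧
      Matrix.vecMul (fun v => x ⟨v, ⟨0, hdeg v⟩⟩) M
        = η • fun v => x ⟨v, ⟨0, hdeg v⟩⟩) ∧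
    (∀ (y : V → ℝ) (η : ℝ), Matrix.vecMul y M = η • y →
      (Matrix.vecMul (fun x : RPVert G => y x.1) P = η • fun x : RPVert G => y x.1) ∧
      (y ≠ 0 → (fun x : RPVert G => y x.1) ≠ 0)) := by

  subst hWG hM hP
  have hdne : ∀ v : V, (G.degree v : ℝ) ≠ 0 := fun v =>
    Nat.cast_ne_zero.2 (hdeg v).ne'
  set WG : Matrix V V ℝ := Matrix.of fun u v =>
      (2 : ℝ)⁻¹ * ((if u = v then (1 : ℝ) else 0)
        + (if G.Adj u v then (1 : ℝ) else 0) / (G.degree u : ℝ)) with hWG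
  have hPapp : ∀ (x : RPVert G → ℝ) (s : RPVert G),
      Matrix.vecMul x (Matrix.of fun a b : RPVert G => WG a.1 b.1 / (G.degree b.1 : ℝ)) s
        = ∑ u : V, (∑ i : Fin (G.degree u), x ⟨u, i⟩) * (WG u s.1 / (G.degree s.1 : ℝ)) := by
    intro x s
    simp only [Matrix.vecMul, dotProduct, Matrix.of_apply, Finset.sum_mul]
    rw [← Finset.univ_sigma_univ, Finset.sum_sigma]
  have hMapp : ∀ (y : V → ℝ) (v : V),
      Matrix.vecMul y ((2 : ℝ)⁻¹ • ((1 : Matrix V V ℝ) +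
          G.adjMatrix ℝ * Matrix.diagonal fun v => ((G.degree v : ℝ))⁻¹)) v
        = ∑ u : V, ((G.degree u : ℝ) * y u) * (WG u v / (G.degree v : ℝ)) := by
    intro y v
    simp only [Matrix.vecMul, dotProduct, Matrix.smul_apply, Matrix.add_apply,
      Matrix.one_apply, Matrix.mul_diagonal, SimpleGraph.adjMatrix_apply, hWG,
      Matrix.of_apply, smul_eq_mul]
    refine Finset.sum_congr rfl fun u _ => ?_
    have h1 := hdne u
    have h2 := hdne v
    by_cases h : u = v
    · subst h
      simp only [if_pos rfl, SimpleGraph.irrefl, if_neg (G.irrefl (v := u))]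
      field_simp
    · simp only [if_neg h]
      by_cases ha : G.Adj u v
      · simp only [if_pos ha]
        field_simp
        ring
      · simp [if_neg ha]
  refine ⟨?_, ?_⟩
  · intro x η hη hx
    have hSval : ∀ s : RPVert G,
        ∑ u : V, (∑ i : Fin (G.degree u), x ⟨u, i⟩) * (WG u s.1 / (G.degree s.1 : ℝ))
          = η * x s := by
      intro s
      have := congrFun hx s
      rw [hPapp] at this
      simpa using this
    have hconst : ∀ (v : V) (j j' : Fin (G.degree v)), x ⟨v, j⟩ = x ⟨v, j'⟩ := by
      intro v j j'
      have h1 := hSval ⟨v, j⟩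
      have h2 := hSval ⟨v, j'⟩
      have := h1.symm.trans h2
      exact mul_left_cancel₀ hη this
    refine ⟨hconst, ?_⟩
    funext v
    rw [hMapp]
    have hsum : ∀ u : V, (∑ i : Fin (G.degree u), x ⟨u, i⟩)
        = (G.degree u : ℝ) * x ⟨u, ⟨0, hdeg u⟩⟩ := by
      intro u
      rw [Finset.sum_congr rfl fun i _ => hconst u i ⟨0, hdeg u⟩]
      simp [mul_comm]
    have := hSval ⟨v, ⟨0, hdeg v⟩⟩
    simp only [hsum] at this
    simpa using this
  · intro y η hy
    constructor
    · funext s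
      rw [hPapp]
      have := congrFun hy s.1
      rw [hMapp] at this
      simp only [Finset.sum_const, Finset.card_univ, Fintype.card_fin, nsmul_eq_mul]
      simpa using this
    · intro hy0 hx0
      apply hy0
      funext v
      have := congrFun hx0 ⟨v, ⟨0, hdeg v⟩⟩
      simpa using this
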